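/- arXiv:0802.4187 — 2 statements merged into one kernel-verified Lean document; each statement's English description precedes it below -/
import Mathlib

section
/- Let f ∈ Homeo₀(𝕋^d) with lift F, let K ⊆ 𝕋^d be a compact f-invariant set on which f is minimal, let v ∈ ℝ^d \ {0}, λ ∈ ℝ with ρ_K(F) ⊆ λv + {v}^⊥, and suppose the deviations parallel to v are not uniformly bounded on K, i.e. sup_{n∈ℕ, z∈K} |D_v(n,z)| = ∞. Then f restricted to K has sensitive dependence on initial conditions. -/
open Filter Topology Set
open scoped RealInnerProductSpace

noncomputable section

abbrev E (d : ℕ) : Type := EuclideanSpace ℝ (Fin d)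

/-- The integer lattice `ℤ^d` inside `ℝ^d`. -/
def intLattice (d : ℕ) : AddSubgroup (E d) where
  carrier := {x : E d | ∀ i, ∃ m : ℤ, x i = (m : ℝ)}
  zero_mem' := fun i => ⟨0, by simp⟩
  add_mem' := by
    intro a b ha hb i
    obtain ⟨m, hm⟩ := ha i
    obtain ⟨n, hn⟩ := hb i
    refine ⟨m + n, ?_⟩
    have h : (a + b) i = a i + b i := rfl
    rw [h, hm, hn]; push_cast; ring
  neg_mem' := by
    intro a ha i
    obtain ⟨m, hm⟩ := ha i
    refine ⟨-m, ?_⟩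
    have h : (-a) i = -(a i) := rfl
    rw [h, hm]; push_cast; ring

/-- The torus `𝕋^d = ℝ^d / ℤ^d`. -/
abbrev Torus (d : ℕ) : Type := E d ⧸ intLattice d

/-- The canonical projection `π : ℝ^d → 𝕋^d`. -/
def Tproj (d : ℕ) : E d → Torus d := QuotientAddGroup.mk

/-- `F` is a lift of `f`; together with `F` being a homeomorphism this encodes
`f ∈ Homeo₀(𝕋^d)` with lift `F`. -/
def IsLiftOf {d : ℕ} (F : E d ≃ₜ E d) (f : Torus d → Torus d) : Prop :=
  (∀ z : E d, Tproj d (F z) = f (Tproj d z)) ∧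
  (∀ z : E d, ∀ m ∈ intLattice d, F (z + m) = F z + m)

/-- The rotation set of `f` on `A ⊆ 𝕋^d`. -/
def rotSetOn {d : ℕ} (F : E d ≃ₜ E d) (A : Set (Torus d)) : Set (E d) :=
  {ρ | ∃ (n : ℕ → ℕ) (z : ℕ → E d), StrictMono n ∧ (∀ i, Tproj d (z i) ∈ A) ∧
      Tendsto (fun i => (n i : ℝ)⁻¹ • ((F : E d → E d)^[n i] (z i) - z i)) atTop (𝓝 ρ)}

/-- The rotation set `ρ(F)`. -/
def rotSet {d : ℕ} (F : E d ≃ₜ E d) : Set (E d) := rotSetOn F Set.univ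

/-- The deviation from the constant rotation, `D(n,z) = F^n(z) - z - nρ`. -/
def dev {d : ℕ} (F : E d ≃ₜ E d) (ρ : E d) (n : ℕ) (z : E d) : E d :=
  (F : E d → E d)^[n] z - z - (n : ℝ) • ρ

/-- The deviation parallel to `v`, `D_v(n,z) = ⟨F^n(z) - z - nρ, v⟩`. -/
def devIn {d : ℕ} (F : E d ≃ₜ E d) (ρ : E d) (v : E d) (n : ℕ) (z : E d) : ℝ :=
  ⟪dev F ρ n z, v⟫

/-- `1, ρ_1, …, ρ_d` are linearly independent over `ℚ`. -/
def TotallyIrrational {d : ℕ} (ρ : E d) : Prop :=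
  ∀ (k : Fin d → ℤ) (m : ℤ), (∑ i, (k i : ℝ) * ρ i) = (m : ℝ) → ∀ i, k i = 0

/-- `f` has bounded mean motion (w.r.t. the rotation vector `ρ`). -/
def BoundedMeanMotion {d : ℕ} (F : E d ≃ₜ E d) (ρ : E d) : Prop :=
  ∃ C : ℝ, ∀ (n : ℕ) (z : E d), ‖dev F ρ n z‖ ≤ C

/-- `f` is non-wandering: no nonempty open set is wandering. -/
def NonWandering {d : ℕ} (f : Torus d → Torus d) : Prop :=
  ∀ U : Set (Torus d), IsOpen U → U.Nonempty → ∃ n : ℕ, 0 < n ∧ (U ∩ f^[n] '' U).Nonempty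

/-- Projection of the deviation vector to the linear subspace `V`. -/
def devProj {d : ℕ} (F : E d ≃ₜ E d) (V : Submodule ℝ (E d)) (ρ : E d) (n : ℕ) (z : E d) : E d :=
  (V.orthogonalProjection (dev F ρ n z) : E d)

/-- The set of asymptotic directions `𝒜_V(z)`. -/
def asympDirs {d : ℕ} (F : E d ≃ₜ E d) (V : Submodule ℝ (E d)) (ρ : E d) (z : E d) :
    Set (E d) :=
  {v | ‖v‖ = 1 ∧ ∀ ε > (0 : ℝ), ∀ r > (0 : ℝ), ∃ n : ℕ,
      r < ‖devProj F V ρ n z‖ ∧ ‖(‖devProj F V ρ n z‖)⁻¹ • devProj F V ρ n z - v‖ < ε}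

/-- `S^+(v) = {w ∈ 𝕊^{d-1} : ⟨v,w⟩ > 0}`. -/
def Splus {d : ℕ} (v : E d) : Set (E d) := {w | ‖w‖ = 1 ∧ 0 < ⟪v, w⟫}

/-- `z` is `ε`-Lyapunov stable for `h`. -/
def LyapStable {X : Type*} [PseudoMetricSpace X] (h : X → X) (ε : ℝ) (z : X) : Prop :=
  ∃ δ > (0 : ℝ), ∀ n : ℕ, ∀ w, dist z w < δ → dist (h^[n] z) (h^[n] w) < ε

/-- `ε_f`, the largest `ε` such that `ε`-close points have `1/2`-close images. -/
def epsF {d : ℕ} (f : Torus d → Torus d) : ℝ :=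
  sSup {ε : ℝ | 0 < ε ∧ ∀ z z' : Torus d, dist z z' < ε → dist (f z) (f z') < 1 / 2}

/-- `ℤ`-indexed iterates of a homeomorphism. -/
def iterZ {d : ℕ} (F : E d ≃ₜ E d) : ℤ → E d → E d
  | .ofNat n => (F : E d → E d)^[n]
  | .negSucc n => (F.symm : E d → E d)^[n + 1]

/-- `ℤ`-indexed deviations parallel to `v`. -/
def devZIn {d : ℕ} (F : E d ≃ₜ E d) (ρ v : E d) (n : ℤ) (z : E d) : ℝ :=
  ⟪iterZ F n z - z - (n : ℝ) • ρ, v⟫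


-- coordinate ≤ norm
lemma coord_le_norm {d : ℕ} (x : E d) (i : Fin d) : |x i| ≤ ‖x‖ := by
  rw [EuclideanSpace.norm_eq]
  rw [← Real.sqrt_sq_eq_abs]
  apply Real.sqrt_le_sqrt
  have : |x i| ^ 2 ≤ ∑ j, ‖x j‖ ^ 2 := by
    have := Finset.single_le_sum (f := fun j => ‖x j‖ ^ 2)
      (fun j _ => by positivity) (Finset.mem_univ i)
    simpa [sq_abs, Real.norm_eq_abs] using this
  simpa [sq_abs] using this

lemma lattice_norm_ge {d : ℕ} {x : E d} (hx : x ∈ intLattice d) (hne : x ≠ 0) : 1 ≤ ‖x‖ := by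
  have : ∃ i, x i ≠ 0 := by
    by_contra hc
    push_neg at hc
    exact hne (by ext i; simpa using hc i)
  obtain ⟨i, hi⟩ := this
  obtain ⟨m, hm⟩ := hx i
  have hm0 : m ≠ 0 := by rintro rfl; simp at hm; exact hi hm
  have h1 : (1 : ℝ) ≤ |x i| := by
    rw [hm]
    rw [← Int.cast_abs]
    exact_mod_cast Int.one_le_abs hm0
  exact h1.trans (coord_le_norm x i)

lemma lattice_eq_zero_of_norm_lt {d : ℕ} {x : E d} (hx : x ∈ intLattice d) (h : ‖x‖ < 1) :
    x = 0 := by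
  by_contra hne
  exact absurd h (not_lt.2 (lattice_norm_ge hx hne))

-- reduction to fundamental domain
lemma exists_lattice_near {d : ℕ} (x : E d) :
    ∃ m ∈ intLattice d, ‖x - m‖ ≤ Real.sqrt d := by
  classical
  set m : E d := WithLp.toLp 2 (fun i => ((⌊x i⌋ : ℤ) : ℝ)) with hmdef
  refine ⟨m, fun i => ⟨⌊x i⌋, rfl⟩, ?_⟩
  rw [EuclideanSpace.norm_eq]
  apply Real.sqrt_le_sqrt
  have hb : ∀ i : Fin d, ‖(x - m) i‖ ^ 2 ≤ 1 := by
    intro i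
    have h1 : (x - m) i = x i - ⌊x i⌋ := rfl
    rw [h1, Real.norm_eq_abs]
    have h2 : |x i - ⌊x i⌋| ≤ 1 := by
      rw [abs_of_nonneg (by linarith [Int.floor_le (x i)])]
      linarith [Int.lt_floor_add_one (x i)]
    nlinarith [abs_nonneg (x i - (⌊x i⌋:ℝ))]
  calc ∑ i, ‖(x - m) i‖ ^ 2 ≤ ∑ _i : Fin d, (1:ℝ) := Finset.sum_le_sum (fun i _ => hb i)
    _ = d := by simp

-- quotient lemmas
lemma Tproj_dist_le {d : ℕ} (a b : E d) : dist (Tproj d a) (Tproj d b) ≤ ‖a - b‖ := by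
  rw [dist_eq_norm]
  have h2 : Tproj d a - Tproj d b = ((a - b : E d) : Torus d) := by
    show ((a : E d) : Torus d) - ((b : E d) : Torus d) = _
    simp [QuotientAddGroup.mk_sub]
  rw [h2]
  exact QuotientAddGroup.norm_mk_le_norm

lemma sub_mem_of_Tproj_eq {d : ℕ} {a b : E d} (h : Tproj d a = Tproj d b) :
    b - a ∈ intLattice d := by
  rw [Tproj, QuotientAddGroup.eq] at h
  simpa [neg_add_eq_sub] using h

lemma exists_lift_close {d : ℕ} {a : E d} {w : Torus d} {r : ℝ}
    (h : dist (Tproj d a) w < r) : ∃ b : E d, Tproj d b = w ∧ ‖a - b‖ < r := by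
  obtain ⟨b₀, rfl⟩ := QuotientAddGroup.mk_surjective w
  rw [dist_eq_norm] at h
  have h2 : Tproj d a - ((b₀ : E d) : Torus d) = ((a - b₀ : E d) : Torus d) := by
    show ((a : E d) : Torus d) - _ = _
    simp [QuotientAddGroup.mk_sub]
  rw [h2] at h
  obtain ⟨u, hu, hun⟩ := QuotientAddGroup.norm_lt_iff.1 h
  refine ⟨a - u, ?_, by simpa using hun⟩
  show ((a - u : E d) : Torus d) = _
  have h3 : ((a - u : E d) : Torus d) = ((a : E d) : Torus d) - u := by
    simp [QuotientAddGroup.mk_sub]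
  rw [h3, hu, QuotientAddGroup.mk_sub]
  abel

-- equivariant maps: boundedness of displacement and uniform continuity
lemma equivariant_disp_bound {d : ℕ} (G : E d → E d) (hG : Continuous G)
    (heq : ∀ z, ∀ m ∈ intLattice d, G (z + m) = G z + m) :
    ∃ C : ℝ, 0 ≤ C ∧ ∀ z, ‖G z - z‖ ≤ C := by
  have hcont : ContinuousOn (fun z => ‖G z - z‖) (Metric.closedBall (0 : E d) (Real.sqrt d)) :=
    (Continuous.norm (hG.sub continuous_id)).continuousOn
  have hne : (Metric.closedBall (0 : E d) (Real.sqrt d)).Nonempty :=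
    ⟨0, Metric.mem_closedBall_self (Real.sqrt_nonneg _)⟩
  obtain ⟨z₀, _, hz₀⟩ := (isCompact_closedBall (0 : E d) (Real.sqrt d)).exists_isMaxOn hne hcont
  refine ⟨‖G z₀ - z₀‖, norm_nonneg _, fun z => ?_⟩
  obtain ⟨m, hm, hnear⟩ := exists_lattice_near z
  have h1 : G (z - m) - (z - m) = G z - z := by
    have : G (z - m) = G z - m := by
      have := heq z (-m) (neg_mem hm)
      simpa [sub_eq_add_neg] using this
    rw [this]; abel
  have h2 : z - m ∈ Metric.closedBall (0 : E d) (Real.sqrt d) := by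
    simpa [Metric.mem_closedBall, dist_eq_norm] using hnear
  calc ‖G z - z‖ = ‖G (z - m) - (z - m)‖ := by rw [h1]
    _ ≤ ‖G z₀ - z₀‖ := hz₀ h2

lemma equivariant_unifCont {d : ℕ} (G : E d → E d) (hG : Continuous G)
    (heq : ∀ z, ∀ m ∈ intLattice d, G (z + m) = G z + m) :
    ∀ ε > (0:ℝ), ∃ δ > (0:ℝ), ∀ x y : E d, ‖x - y‖ < δ → ‖G x - G y‖ < ε := by
  intro ε hε
  set h : E d → E d := fun z => G z - z with hh
  have hcont : Continuous h := hG.sub continuous_id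
  set S := Metric.closedBall (0 : E d) (Real.sqrt d + 1) with hS
  have hUC : UniformContinuousOn h S :=
    (isCompact_closedBall _ _).uniformContinuousOn_of_continuous hcont.continuousOn
  rw [Metric.uniformContinuousOn_iff] at hUC
  obtain ⟨δ, hδ, hδ'⟩ := hUC (ε/2) (by linarith)
  refine ⟨min δ (min 1 (ε/2)), by positivity, fun x y hxy => ?_⟩
  obtain ⟨m, hm, hnear⟩ := exists_lattice_near x
  have hxS : x - m ∈ S := by
    simp only [hS, Metric.mem_closedBall, dist_eq_norm, sub_zero]
    linarith
  have hyS : y - m ∈ S := by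
    simp only [hS, Metric.mem_closedBall, dist_eq_norm, sub_zero]
    have : ‖y - m‖ ≤ ‖y - x‖ + ‖x - m‖ := by
      calc ‖y - m‖ = ‖(y - x) + (x - m)‖ := by rw [show y - m = (y - x) + (x - m) by abel]
        _ ≤ ‖y - x‖ + ‖x - m‖ := norm_add_le _ _
    have h1 : ‖y - x‖ < 1 := by
      rw [norm_sub_rev]
      exact lt_of_lt_of_le hxy (le_trans (min_le_right _ _) (min_le_left _ _))
    linarith
  have hdist : dist (x - m) (y - m) < δ := by
    rw [dist_eq_norm]
    have : (x - m) - (y - m) = x - y := by abel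
    rw [this]
    exact lt_of_lt_of_le hxy (min_le_left _ _)
  have hhm : ∀ z : E d, h (z - m) = h z := by
    intro z
    have : G (z - m) = G z - m := by
      have := heq z (-m) (neg_mem hm)
      simpa [sub_eq_add_neg] using this
    simp only [hh, this]; abel
  have hkey : dist (h x) (h y) < ε/2 := by
    have := hδ' _ hxS _ hyS hdist
    rwa [hhm, hhm] at this
  have hfin : ‖G x - G y‖ ≤ ‖h x - h y‖ + ‖x - y‖ := by
    calc ‖G x - G y‖ = ‖(h x - h y) + (x - y)‖ := by
          simp only [hh]
          rw [show G x - G y = (G x - x - (G y - y)) + (x - y) by abel]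
      _ ≤ ‖h x - h y‖ + ‖x - y‖ := norm_add_le _ _
  rw [dist_eq_norm] at hkey
  have hxy2 : ‖x - y‖ < ε/2 := lt_of_lt_of_le hxy (le_trans (min_le_right _ _) (min_le_right _ _))
  linarith

section Dyn
variable {d : ℕ} {f : Torus d → Torus d} {F : E d ≃ₜ E d} (hlift : IsLiftOf F f)

include hlift

lemma iter_equivariant (n : ℕ) : ∀ z : E d, ∀ m ∈ intLattice d,
    (F : E d → E d)^[n] (z + m) = (F : E d → E d)^[n] z + m := by
  induction n with
  | zero => intro z m _; simp
  | succ k ih =>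
    intro z m hm
    rw [Function.iterate_succ_apply', Function.iterate_succ_apply', ih z m hm]
    exact hlift.2 _ m hm

lemma iter_proj (n : ℕ) : ∀ z : E d,
    Tproj d ((F : E d → E d)^[n] z) = f^[n] (Tproj d z) := by
  induction n with
  | zero => intro z; simp
  | succ k ih =>
    intro z
    rw [Function.iterate_succ_apply', Function.iterate_succ_apply', ← ih z]
    exact hlift.1 _

lemma devIn_congr (ρ v : E d) (n : ℕ) {z z' : E d} (h : Tproj d z = Tproj d z') :
    devIn F ρ v n z = devIn F ρ v n z' := by
  have hm : z' - z ∈ intLattice d := sub_mem_of_Tproj_eq h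
  have hz' : (F : E d → E d)^[n] z' = (F : E d → E d)^[n] z + (z' - z) := by
    rw [show z' = z + (z' - z) by abel] 
    rw [iter_equivariant hlift n z _ hm]
    congr 2
    abel
  unfold devIn dev
  rw [hz']
  congr 1
  abel

omit hlift in
lemma devIn_cocycle (ρ v : E d) (m n : ℕ) (z : E d) :
    devIn F ρ v (m + n) z = devIn F ρ v m z + devIn F ρ v n ((F : E d → E d)^[m] z) := by
  unfold devIn dev
  rw [← inner_add_left]
  congr 1
  rw [add_comm m n, Function.iterate_add_apply]
  push_cast
  rw [add_smul]
  abel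

-- displacement bound
lemma exists_disp_bound : ∃ C : ℝ, 0 ≤ C ∧ ∀ z : E d, ‖(F : E d → E d) z - z‖ ≤ C :=
  equivariant_disp_bound F F.continuous hlift.2

omit hlift in
lemma iter_disp_bound {C : ℝ} (hC : ∀ z : E d, ‖(F : E d → E d) z - z‖ ≤ C) (n : ℕ) (z : E d) :
    ‖(F : E d → E d)^[n] z - z‖ ≤ n * C := by
  induction n with
  | zero => simp
  | succ k ih =>
    rw [Function.iterate_succ_apply']
    have key : ‖(F : E d → E d) ((F : E d → E d)^[k] z) - z‖ ≤ C + k * C := by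
      calc ‖(F : E d → E d) ((F : E d → E d)^[k] z) - z‖
          ≤ ‖(F : E d → E d) ((F : E d → E d)^[k] z) - (F : E d → E d)^[k] z‖ +
            ‖(F : E d → E d)^[k] z - z‖ := by
            rw [show (F : E d → E d) ((F : E d → E d)^[k] z) - z =
              ((F : E d → E d) ((F : E d → E d)^[k] z) - (F : E d → E d)^[k] z) +
              ((F : E d → E d)^[k] z - z) by abel]
            exact norm_add_le _ _
        _ ≤ C + k * C := add_le_add (hC _) ih
    exact le_of_le_of_eq key (by push_cast; ring)

omit hlift in
lemma devIn_time_bound {C : ℝ} (hC : ∀ z : E d, ‖(F : E d → E d) z - z‖ ≤ C)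
    (lam : ℝ) (v : E d) (n : ℕ) (z : E d) :
    |devIn F (lam • v) v n z| ≤ n * (C + |lam| * ‖v‖) * ‖v‖ := by
  unfold devIn dev
  calc |⟪(F : E d → E d)^[n] z - z - (n:ℝ) • (lam • v), v⟫|
      ≤ ‖(F : E d → E d)^[n] z - z - (n:ℝ) • (lam • v)‖ * ‖v‖ := abs_real_inner_le_norm _ _
    _ ≤ (n * C + n * (|lam| * ‖v‖)) * ‖v‖ := by
        apply mul_le_mul_of_nonneg_right _ (norm_nonneg v)
        calc ‖(F : E d → E d)^[n] z - z - (n:ℝ) • (lam • v)‖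
            ≤ ‖(F : E d → E d)^[n] z - z‖ + ‖(n:ℝ) • (lam • v)‖ := norm_sub_le _ _
          _ ≤ n * C + n * (|lam| * ‖v‖) := by
              apply add_le_add (iter_disp_bound (F := F) hC n z)
              rw [norm_smul, norm_smul, Real.norm_eq_abs, Real.norm_eq_abs, Nat.abs_cast]
    _ = n * (C + |lam| * ‖v‖) * ‖v‖ := by ring

-- uniform continuity of f^[s] on the torus
lemma torus_iter_unifCont (s : ℕ) : ∀ ε > (0:ℝ), ∃ δ > (0:ℝ),
    ∀ w w' : Torus d, dist w w' < δ → dist (f^[s] w) (f^[s] w') < ε := by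
  intro ε hε
  obtain ⟨δ, hδ, hδ'⟩ := equivariant_unifCont ((F : E d → E d)^[s])
    (F.continuous.iterate s) (iter_equivariant hlift s) ε hε
  refine ⟨δ, hδ, fun w w' hww => ?_⟩
  obtain ⟨a, rfl⟩ := QuotientAddGroup.mk_surjective w
  obtain ⟨b, hb, hab⟩ := exists_lift_close (a := a) (w := w') (r := δ) hww
  rw [← hb]
  show dist (f^[s] (Tproj d a)) (f^[s] (Tproj d b)) < ε
  rw [← iter_proj hlift s a, ← iter_proj hlift s b]
  calc dist (Tproj d ((F : E d → E d)^[s] a)) (Tproj d ((F : E d → E d)^[s] b))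
      ≤ ‖(F : E d → E d)^[s] a - (F : E d → E d)^[s] b‖ := Tproj_dist_le _ _
    _ < ε := hδ' a b hab

-- simultaneous uniform continuity for s ≤ N
lemma torus_iter_unifCont_upto (N : ℕ) : ∀ ε > (0:ℝ), ∃ δ > (0:ℝ),
    ∀ s ≤ N, ∀ w w' : Torus d, dist w w' < δ → dist (f^[s] w) (f^[s] w') < ε := by
  intro ε hε
  induction N with
  | zero =>
    obtain ⟨δ, hδ, hδ'⟩ := torus_iter_unifCont hlift 0 ε hε
    exact ⟨δ, hδ, fun s hs => by simpa [Nat.le_zero.1 hs] using hδ'⟩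
  | succ k ih =>
    obtain ⟨δ₁, hδ₁, hδ₁'⟩ := ih
    obtain ⟨δ₂, hδ₂, hδ₂'⟩ := torus_iter_unifCont hlift (k+1) ε hε
    refine ⟨min δ₁ δ₂, lt_min hδ₁ hδ₂, fun s hs w w' hww => ?_⟩
    rcases eq_or_lt_of_le hs with h | h
    · subst h
      exact hδ₂' w w' (lt_of_lt_of_le hww (min_le_right _ _))
    · exact hδ₁' s (Nat.lt_succ_iff.1 h) w w' (lt_of_lt_of_le hww (min_le_left _ _))

end Dyn

section Dyn2
variable {d : ℕ} {f : Torus d → Torus d} {F : E d ≃ₜ E d} {K : Set (Torus d)}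

lemma iter_mem_K (hKinv : f '' K = K) (s : ℕ) {w : Torus d} (hw : w ∈ K) : f^[s] w ∈ K := by
  induction s with
  | zero => simpa
  | succ k ih =>
    rw [Function.iterate_succ_apply', ← hKinv]
    exact ⟨_, ih, rfl⟩

lemma entry_lemma (hlift : IsLiftOf F f) (hKc : IsCompact K)
    (hmin : ∀ z ∈ K, K ⊆ closure (Set.range fun n : ℕ => f^[n] z))
    {p : Torus d} (hp : p ∈ K) {r : ℝ} (hr : 0 < r) :
    ∃ N : ℕ, ∀ w ∈ K, ∃ s ≤ N, dist (f^[s] w) p < r := by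
  classical
  have hchoice : ∀ w ∈ K, ∃ (s : ℕ) (δ : ℝ), 0 < δ ∧
      ∀ w', dist w w' < δ → dist (f^[s] w') p < r := by
    intro w hw
    have hp' : p ∈ closure (Set.range fun n : ℕ => f^[n] w) := hmin w hw hp
    rw [Metric.mem_closure_iff] at hp'
    obtain ⟨b, ⟨s, rfl⟩, hb⟩ := hp' (r/2) (by linarith)
    obtain ⟨δ, hδ, hδ'⟩ := torus_iter_unifCont hlift s (r/2) (by linarith)
    refine ⟨s, δ, hδ, fun w' hww => ?_⟩
    have h1 := hδ' w w' hww
    calc dist (f^[s] w') p ≤ dist (f^[s] w') (f^[s] w) + dist (f^[s] w) p := dist_triangle _ _ _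
      _ < r/2 + r/2 := by
          rw [dist_comm] at h1 hb
          exact add_lt_add h1 hb
      _ = r := by ring
  choose! sfun δfun hδpos hprop using hchoice
  have hcover : K ⊆ ⋃ w ∈ K, Metric.ball w (δfun w) := by
    intro w hw
    exact Set.mem_biUnion hw (Metric.mem_ball_self (hδpos w hw))
  obtain ⟨b', hb'sub, hb'fin, hb'cover⟩ := hKc.elim_finite_subcover_image
    (fun w _ => Metric.isOpen_ball) hcover
  refine ⟨hb'fin.toFinset.sup sfun, fun w hw => ?_⟩
  obtain ⟨x, hx, hwx⟩ := Set.mem_iUnion₂.1 (hb'cover hw)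
  refine ⟨sfun x, Finset.le_sup (hb'fin.mem_toFinset.2 hx), ?_⟩
  exact hprop x (hb'sub hx) w (by rw [dist_comm]; exact Metric.mem_ball.1 hwx)

lemma devIn_sublinear (lam : ℝ) (v : E d)
    (hrot : ∀ ρ' ∈ rotSetOn F K, ⟪ρ' - lam • v, v⟫ = 0)
    {C : ℝ} (hC0 : 0 ≤ C) (hC : ∀ z : E d, ‖(F : E d → E d) z - z‖ ≤ C)
    {η : ℝ} (hη : 0 < η) :
    ∃ N : ℕ, ∀ n ≥ N, ∀ z : E d, Tproj d z ∈ K → |devIn F (lam • v) v n z| ≤ η * n := by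
  classical
  by_contra hcon
  push_neg at hcon
  choose nfun hnge zfun hzK hzbig using hcon
  -- build a strictly monotone sequence of times
  set idx : ℕ → ℕ := fun i => Nat.rec 1 (fun _ prev => nfun prev + 1) i with hidx
  set g : ℕ → ℕ := fun i => nfun (idx i) with hg
  have hidxs : ∀ i, idx (i + 1) = g i + 1 := fun i => rfl
  have hglt : ∀ i, g i < g (i + 1) := by
    intro i
    have := hnge (idx (i + 1))
    rw [hidxs i] at this
    exact lt_of_lt_of_le (Nat.lt_succ_self _) this
  have hgmono : StrictMono g := strictMono_nat_of_lt_succ hglt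
  have hg1 : ∀ i, 1 ≤ g i := by
    intro i
    induction i with
    | zero => exact hnge 1
    | succ k ih => exact le_trans ih (le_of_lt (hglt k))
  set ζ : ℕ → E d := fun i => zfun (idx i) with hζ
  set u : ℕ → E d := fun i => ((g i : ℝ))⁻¹ • ((F : E d → E d)^[g i] (ζ i) - ζ i) with hu
  have hgpos : ∀ i, (0:ℝ) < g i := fun i => by exact_mod_cast hg1 i
  have hub : ∀ i, u i ∈ Metric.closedBall (0 : E d) C := by
    intro i
    rw [Metric.mem_closedBall, dist_zero_right, hu]
    have h1 : ‖((g i : ℝ))⁻¹ • ((F : E d → E d)^[g i] (ζ i) - ζ i)‖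
        = ((g i : ℝ))⁻¹ * ‖(F : E d → E d)^[g i] (ζ i) - ζ i‖ := by
      rw [norm_smul, Real.norm_eq_abs, abs_of_pos (inv_pos.2 (hgpos i))]
    rw [h1]
    rw [inv_mul_le_iff₀ (hgpos i)]
    exact iter_disp_bound (F := F) hC _ _
  obtain ⟨ρ', _, φ, hφmono, hφtend⟩ :=
    tendsto_subseq_of_bounded Metric.isBounded_closedBall hub
  have hmem : ρ' ∈ rotSetOn F K := by
    refine ⟨g ∘ φ, ζ ∘ φ, hgmono.comp hφmono, fun i => hzK _, ?_⟩
    exact hφtend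
  have h0 : ⟪ρ' - lam • v, v⟫ = 0 := hrot ρ' hmem
  have hlim : Tendsto (fun i => |⟪u (φ i) - lam • v, v⟫|) atTop (𝓝 |⟪ρ' - lam • v, v⟫|) := by
    have h2 : Tendsto (fun i => u (φ i) - lam • v) atTop (𝓝 (ρ' - lam • v)) :=
      Filter.Tendsto.sub hφtend tendsto_const_nhds
    exact (Filter.Tendsto.inner h2 tendsto_const_nhds).abs
  have hlow : ∀ i, η ≤ |⟪u (φ i) - lam • v, v⟫| := by
    intro i
    have hne : ((g (φ i) : ℝ)) ≠ 0 := ne_of_gt (hgpos (φ i))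
    have hkey : ⟪u (φ i) - lam • v, v⟫
        = ((g (φ i) : ℝ))⁻¹ * devIn F (lam • v) v (g (φ i)) (ζ (φ i)) := by
      unfold devIn dev
      rw [← real_inner_smul_left]
      congr 1
      have hdecomp : ((g (φ i) : ℝ))⁻¹ • ((F : E d → E d)^[g (φ i)] (ζ (φ i)) - ζ (φ i)
          - ((g (φ i) : ℝ)) • (lam • v)) = u (φ i) - lam • v := by
        rw [smul_sub, smul_smul, inv_mul_cancel₀ hne, one_smul]
      exact hdecomp.symm
    have h5 : η * (g (φ i) : ℝ) ≤ |devIn F (lam • v) v (g (φ i)) (ζ (φ i))| :=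
      le_of_lt (hzbig (idx (φ i)))
    have hinv : (0:ℝ) < ((g (φ i) : ℝ))⁻¹ := inv_pos.2 (hgpos (φ i))
    have h6 : ((g (φ i) : ℝ))⁻¹ * (η * (g (φ i) : ℝ))
        ≤ ((g (φ i) : ℝ))⁻¹ * |devIn F (lam • v) v (g (φ i)) (ζ (φ i))| :=
      mul_le_mul_of_nonneg_left h5 (le_of_lt hinv)
    have h7 : ((g (φ i) : ℝ))⁻¹ * (η * (g (φ i) : ℝ)) = η := by
      field_simp
    rw [hkey, abs_mul, abs_of_pos hinv]
    calc η = ((g (φ i) : ℝ))⁻¹ * (η * (g (φ i) : ℝ)) := h7.symm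
      _ ≤ _ := h6
  have : η ≤ |⟪ρ' - lam • v, v⟫| := ge_of_tendsto' hlim hlow
  rw [h0] at this
  simp at this
  linarith

lemma comparison (hlift : IsLiftOf F f) {ε₀ : ℝ} (hε₀ : 0 < ε₀) (hε₀4 : ε₀ ≤ 1/4)
    (hF2 : ∀ x y : E d, ‖x - y‖ ≤ ε₀ → ‖(F : E d → E d) x - (F : E d → E d) y‖ < 1/2)
    {δ : ℝ} (hδε : δ ≤ ε₀)
    (hUE : ∀ w ∈ K, ∀ w' ∈ K, dist w w' < δ → ∀ n, dist (f^[n] w) (f^[n] w') < ε₀)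
    {a b : E d} (ha : Tproj d a ∈ K) (hb : Tproj d b ∈ K)
    (hab : dist (Tproj d a) (Tproj d b) < δ) (ρ v : E d) :
    ∀ n, |devIn F ρ v n a - devIn F ρ v n b| ≤ 2 * ε₀ * ‖v‖ := by
  obtain ⟨b', hb', hab'⟩ := exists_lift_close hab
  have key : ∀ n, ‖(F : E d → E d)^[n] a - (F : E d → E d)^[n] b'‖ < ε₀ := by
    intro n
    induction n with
    | zero => simpa using lt_of_lt_of_le hab' hδε
    | succ k ih =>
      have h1 : ‖(F : E d → E d)^[k+1] a - (F : E d → E d)^[k+1] b'‖ < 1/2 := by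
        rw [Function.iterate_succ_apply', Function.iterate_succ_apply']
        exact hF2 _ _ (le_of_lt ih)
      have h2 : dist (f^[k+1] (Tproj d a)) (f^[k+1] (Tproj d b)) < ε₀ := hUE _ ha _ hb hab (k+1)
      have h3 : dist (Tproj d ((F : E d → E d)^[k+1] a))
          (Tproj d ((F : E d → E d)^[k+1] b')) < ε₀ := by
        rw [iter_proj hlift, iter_proj hlift, hb']
        exact h2
      obtain ⟨u, hu, hun⟩ := exists_lift_close h3
      have hm : (F : E d → E d)^[k+1] b' - u ∈ intLattice d := sub_mem_of_Tproj_eq hu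
      have hnorm : ‖(F : E d → E d)^[k+1] b' - u‖ < 1 := by
        calc ‖(F : E d → E d)^[k+1] b' - u‖
            ≤ ‖(F : E d → E d)^[k+1] b' - (F : E d → E d)^[k+1] a‖ +
              ‖(F : E d → E d)^[k+1] a - u‖ := by
              rw [show (F : E d → E d)^[k+1] b' - u =
                ((F : E d → E d)^[k+1] b' - (F : E d → E d)^[k+1] a) +
                ((F : E d → E d)^[k+1] a - u) by abel]
              exact norm_add_le _ _
          _ < 1/2 + ε₀ := by
              rw [norm_sub_rev] at h1
              exact add_lt_add h1 hun
          _ < 1 := by linarith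
      have hzero := lattice_eq_zero_of_norm_lt hm hnorm
      have huq : u = (F : E d → E d)^[k+1] b' := by
        have := sub_eq_zero.1 hzero
        exact this.symm
      rw [← huq]
      exact hun
  intro n
  have hval : devIn F ρ v n b = devIn F ρ v n b' := devIn_congr hlift ρ v n hb'.symm
  rw [hval]
  unfold devIn dev
  rw [← inner_sub_left]
  have heq : ((F : E d → E d)^[n] a - a - (n:ℝ) • ρ) - ((F : E d → E d)^[n] b' - b' - (n:ℝ) • ρ)
      = ((F : E d → E d)^[n] a - (F : E d → E d)^[n] b') - (a - b') := by abel
  rw [heq]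
  calc |⟪((F : E d → E d)^[n] a - (F : E d → E d)^[n] b') - (a - b'), v⟫|
      ≤ ‖((F : E d → E d)^[n] a - (F : E d → E d)^[n] b') - (a - b')‖ * ‖v‖ :=
        abs_real_inner_le_norm _ _
    _ ≤ (‖(F : E d → E d)^[n] a - (F : E d → E d)^[n] b'‖ + ‖a - b'‖) * ‖v‖ :=
        mul_le_mul_of_nonneg_right (norm_sub_le _ _) (norm_nonneg _)
    _ ≤ (ε₀ + ε₀) * ‖v‖ := by
        apply mul_le_mul_of_nonneg_right _ (norm_nonneg _)
        exact add_le_add (le_of_lt (key n)) (le_of_lt (lt_of_lt_of_le hab' hδε))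
    _ = 2 * ε₀ * ‖v‖ := by ring

end Dyn2

set_option maxHeartbeats 1000000 in
/-- **Corollary (sensitive dependence).** If `f|K` is minimal, `ρ_K(F) ⊆ λv + {v}^⊥` and
the deviations parallel to `v` are not uniformly bounded on `K`, then `f|K` has
sensitive dependence on initial conditions. -/
theorem sensitiveDependence_of_minimal_unbounded_devIn {d : ℕ} (f : Torus d → Torus d)
    (F : E d ≃ₜ E d) (hlift : IsLiftOf F f) (K : Set (Torus d)) (hKc : IsCompact K)
    (hKne : K.Nonempty) (hKinv : f '' K = K)
    (hmin : ∀ z ∈ K, K ⊆ closure (Set.range fun n : ℕ => f^[n] z))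
    (v : E d) (hv : v ≠ 0) (lam : ℝ)
    (hrot : ∀ ρ' ∈ rotSetOn F K, ⟪ρ' - lam • v, v⟫ = 0)
    (hunb : ∀ C : ℝ, ∃ (n : ℕ) (z : E d), Tproj d z ∈ K ∧ C < |devIn F (lam • v) v n z|) :
    ∃ ε > (0 : ℝ), ∀ z ∈ K, ∀ δ > (0 : ℝ), ∃ z' ∈ K, dist z z' < δ ∧
      ∃ n : ℕ, ε ≤ dist (f^[n] z) (f^[n] z') := by
  classical
  have hv0 : 0 < ‖v‖ := norm_pos_iff.2 hv
  obtain ⟨C, hC0, hC⟩ := exists_disp_bound hlift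
  -- geometric constant ε₀
  obtain ⟨δF, hδF, hδF'⟩ := equivariant_unifCont (F : E d → E d) F.continuous hlift.2
    (1/2) (by norm_num)
  set ε₀ : ℝ := min (1/4) (δF/2) with hε₀def
  have hε₀ : 0 < ε₀ := lt_min (by norm_num) (by linarith)
  have hε₀4 : ε₀ ≤ 1/4 := min_le_left _ _
  have hF2 : ∀ x y : E d, ‖x - y‖ ≤ ε₀ → ‖(F : E d → E d) x - (F : E d → E d) y‖ < 1/2 := by
    intro x y h
    exact hδF' x y (lt_of_le_of_lt h (lt_of_le_of_lt (min_le_right _ _) (by linarith)))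
  refine ⟨ε₀/2, by linarith, ?_⟩
  by_contra hcon
  push_neg at hcon
  obtain ⟨z₀, hz₀K, δ₀, hδ₀, hstab⟩ := hcon
  -- entry times into the ball around the stable point
  obtain ⟨N', hN'⟩ := entry_lemma hlift hKc hmin hz₀K (half_pos hδ₀)
  obtain ⟨δu, hδu, hδu'⟩ := torus_iter_unifCont_upto hlift N' (min (δ₀/2) ε₀)
    (lt_min (half_pos hδ₀) hε₀)
  set δs : ℝ := min δu ε₀ with hδsdef
  have hδspos : 0 < δs := lt_min hδu hε₀
  have hδsε : δs ≤ ε₀ := min_le_right _ _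
  -- uniform equicontinuity at scale ε₀
  have hUE : ∀ w ∈ K, ∀ w' ∈ K, dist w w' < δs → ∀ n, dist (f^[n] w) (f^[n] w') < ε₀ := by
    intro w hw w' hw' hww n
    obtain ⟨s, hsN, hs⟩ := hN' w hw
    by_cases hns : n < s
    · have h1 := hδu' n (le_of_lt (lt_of_lt_of_le hns hsN)) w w'
        (lt_of_lt_of_le hww (min_le_left _ _))
      exact lt_of_lt_of_le h1 (min_le_right _ _)
    · push_neg at hns
      have hsww' : dist (f^[s] w) (f^[s] w') < δ₀/2 :=
        lt_of_lt_of_le (hδu' s hsN w w' (lt_of_lt_of_le hww (min_le_left _ _)))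
          (min_le_left _ _)
      have h1 : dist z₀ (f^[s] w) < δ₀ := by
        rw [dist_comm]
        linarith
      have h2 : dist z₀ (f^[s] w') < δ₀ := by
        rw [dist_comm]
        calc dist (f^[s] w') z₀ ≤ dist (f^[s] w') (f^[s] w) + dist (f^[s] w) z₀ :=
              dist_triangle _ _ _
          _ < δ₀/2 + δ₀/2 := by
              rw [dist_comm] at hsww'
              exact add_lt_add hsww' hs
          _ = δ₀ := by ring
      have hw1 := hstab (f^[s] w) (iter_mem_K hKinv s hw) h1
      have hw2 := hstab (f^[s] w') (iter_mem_K hKinv s hw') h2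
      set m := n - s with hm
      have hmn : m + s = n := Nat.sub_add_cancel hns
      have e1 : f^[n] w = f^[m] (f^[s] w) := by
        rw [← Function.iterate_add_apply, hmn]
      have e2 : f^[n] w' = f^[m] (f^[s] w') := by
        rw [← Function.iterate_add_apply, hmn]
      rw [e1, e2]
      calc dist (f^[m] (f^[s] w)) (f^[m] (f^[s] w'))
          ≤ dist (f^[m] (f^[s] w)) (f^[m] z₀) + dist (f^[m] z₀) (f^[m] (f^[s] w')) :=
            dist_triangle _ _ _
        _ < ε₀/2 + ε₀/2 := by
            rw [dist_comm (f^[m] (f^[s] w))]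
            exact add_lt_add (hw1 m) (hw2 m)
        _ = ε₀ := by ring
  -- comparison constant
  set c : ℝ := 2 * ε₀ * ‖v‖ with hcdef
  have hc0 : 0 ≤ c := by positivity
  have hcomp : ∀ a b : E d, Tproj d a ∈ K → Tproj d b ∈ K →
      dist (Tproj d a) (Tproj d b) < δs →
      ∀ n, |devIn F (lam • v) v n a - devIn F (lam • v) v n b| ≤ c :=
    fun a b ha hb hab =>
      comparison hlift hε₀ hε₀4 hF2 hδsε hUE ha hb hab (lam • v) v
  -- finite net of K
  have hcover : K ⊆ ⋃ p ∈ K, Metric.ball p (δs/2) := by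
    intro w hw
    exact Set.mem_biUnion hw (Metric.mem_ball_self (half_pos hδspos))
  obtain ⟨net, hnetsub, hnetfin, hnetcover⟩ := hKc.elim_finite_subcover_image
    (fun p _ => Metric.isOpen_ball) hcover
  -- uniform entry time into all net balls
  have hentry : ∀ p ∈ net, ∃ N : ℕ, ∀ w ∈ K, ∃ s ≤ N, dist (f^[s] w) p < δs/2 :=
    fun p hp => entry_lemma hlift hKc hmin (hnetsub hp) (half_pos hδspos)
  choose! Nfun hNfun using hentry
  set N₀ : ℕ := hnetfin.toFinset.sup Nfun with hN₀def
  -- finite time deviation bound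
  set Cb : ℝ := (C + |lam| * ‖v‖) * ‖v‖ with hCbdef
  have hCb0 : 0 ≤ Cb := by positivity
  set M₁ : ℝ := N₀ * Cb with hM₁def
  have hM₁0 : 0 ≤ M₁ := by positivity
  have htime : ∀ s ≤ N₀, ∀ z : E d, |devIn F (lam • v) v s z| ≤ M₁ := by
    intro s hs z
    calc |devIn F (lam • v) v s z| ≤ s * (C + |lam| * ‖v‖) * ‖v‖ :=
          devIn_time_bound (F := F) hC lam v s z
      _ = s * Cb := by rw [hCbdef]; ring
      _ ≤ N₀ * Cb := by
          apply mul_le_mul_of_nonneg_right _ hCb0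
          exact_mod_cast hs
  -- the unbounded deviation point
  obtain ⟨n, x, hxK, hxbig⟩ := hunb (M₁ + c + 1)
  set D : ℕ → ℝ := fun k => devIn F (lam • v) v k x with hDdef
  have hn1 : 1 ≤ n := by
    by_contra hn0
    push_neg at hn0
    have hn0' : n = 0 := Nat.lt_one_iff.1 hn0
    subst hn0'
    have hz : devIn F (lam • v) v 0 x = 0 := by
      unfold devIn dev
      simp
    rw [hz] at hxbig
    simp at hxbig
    linarith
  -- net point near x
  obtain ⟨p, hpnet, hxp⟩ := Set.mem_iUnion₂.1 (hnetcover hxK)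
  have hxpd : dist (Tproj d x) p < δs/2 := Metric.mem_ball.1 hxp
  have hNp : Nfun p ≤ N₀ := Finset.le_sup (hnetfin.mem_toFinset.2 hpnet)
  -- sign
  set σ : ℝ := if 0 ≤ D n then 1 else -1 with hσdef
  have hσabs : |σ| = 1 := by
    rw [hσdef]
    split_ifs <;> simp
  have hσD : σ * D n = |D n| := by
    rw [hσdef]
    split_ifs with h
    · rw [abs_of_nonneg h]; ring
    · rw [abs_of_neg (lt_of_not_ge h)]; ring
  have hσle : ∀ r : ℝ, -|r| ≤ σ * r := by
    intro r
    have h1 : |σ * r| = |r| := by rw [abs_mul, hσabs, one_mul]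
    have := neg_abs_le (σ * r)
    rwa [h1] at this
  have hσle' : ∀ r : ℝ, σ * r ≤ |r| := by
    intro r
    have h1 : |σ * r| = |r| := by rw [abs_mul, hσabs, one_mul]
    have := le_abs_self (σ * r)
    rwa [h1] at this
  -- key induction: linear growth of deviations
  have claim : ∀ k : ℕ, ∃ m : ℕ, k + 1 ≤ m ∧ m ≤ (k+1) * (n + N₀) ∧ ((k:ℝ) + 1) ≤ σ * D m := by
    intro k
    induction k with
    | zero =>
      refine ⟨n, hn1, by simpa using Nat.le_add_right n N₀, ?_⟩
      rw [hσD]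
      push_cast
      linarith
    | succ k ih =>
      obtain ⟨m, hm1, hm2, hm3⟩ := ih
      have hfm : f^[m] (Tproj d x) ∈ K := iter_mem_K hKinv m hxK
      obtain ⟨s, hsN, hsp⟩ := hNfun p hpnet (f^[m] (Tproj d x)) hfm
      have hiterproj : Tproj d ((F : E d → E d)^[m+s] x) = f^[m+s] (Tproj d x) :=
        iter_proj hlift _ _
      have hsplit : f^[m+s] (Tproj d x) = f^[s] (f^[m] (Tproj d x)) := by
        rw [add_comm, Function.iterate_add_apply]
      have hdistx : dist (Tproj d ((F : E d → E d)^[m+s] x)) (Tproj d x) < δs := by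
        rw [hiterproj, hsplit]
        calc dist (f^[s] (f^[m] (Tproj d x))) (Tproj d x)
            ≤ dist (f^[s] (f^[m] (Tproj d x))) p + dist p (Tproj d x) := dist_triangle _ _ _
          _ < δs/2 + δs/2 := by
              rw [dist_comm p]
              exact add_lt_add hsp hxpd
          _ = δs := by ring
      have hKm : Tproj d ((F : E d → E d)^[m+s] x) ∈ K := by
        rw [hiterproj]
        exact iter_mem_K hKinv _ hxK
      have hcmp := hcomp ((F : E d → E d)^[m+s] x) x hKm hxK hdistx n
      have hco1 : D (m + s + n) = D (m + s) +
          devIn F (lam • v) v n ((F : E d → E d)^[m+s] x) := devIn_cocycle (F := F) _ _ _ _ _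
      have hco2 : D (m + s) = D m + devIn F (lam • v) v s ((F : E d → E d)^[m] x) :=
        devIn_cocycle (F := F) _ _ _ _ _
      have hsmall : |devIn F (lam • v) v s ((F : E d → E d)^[m] x)| ≤ M₁ :=
        htime s (le_trans hsN hNp) _
      refine ⟨m + s + n, by omega, ?_, ?_⟩
      · have hsN₀ : s ≤ N₀ := le_trans hsN hNp
        calc m + s + n ≤ (k+1) * (n + N₀) + N₀ + n :=
              add_le_add_three hm2 hsN₀ le_rfl
          _ = (k+1) * (n + N₀) + (N₀ + n) := by rw [add_assoc]
          _ ≤ (k+1) * (n + N₀) + (n + N₀) := Nat.add_le_add_left (by omega) _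
          _ = (k+1+1) * (n + N₀) := by ring
      · have e1 : σ * D (m + s + n) = σ * D m + σ * devIn F (lam • v) v s ((F : E d → E d)^[m] x)
            + σ * devIn F (lam • v) v n ((F : E d → E d)^[m+s] x) := by
          rw [hco1, hco2]; ring
        have e2 : -M₁ ≤ σ * devIn F (lam • v) v s ((F : E d → E d)^[m] x) := by
          have := hσle (devIn F (lam • v) v s ((F : E d → E d)^[m] x))
          linarith [neg_le_neg hsmall]
        have e3 : σ * devIn F (lam • v) v n ((F : E d → E d)^[m+s] x) ≥ σ * D n - c := by
          have h4 : σ * (devIn F (lam • v) v n ((F : E d → E d)^[m+s] x) - D n) ≥ -c := by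
            have := hσle (devIn F (lam • v) v n ((F : E d → E d)^[m+s] x) - D n)
            linarith [neg_le_neg hcmp]
          have h5 : σ * (devIn F (lam • v) v n ((F : E d → E d)^[m+s] x) - D n)
              = σ * devIn F (lam • v) v n ((F : E d → E d)^[m+s] x) - σ * D n := by ring
          linarith [h4, h5.symm.le, h5.le]
        have e4 : σ * D n - c ≥ M₁ + 1 := by
          rw [hσD]
          linarith
        push_cast
        push_cast at hm3
        linarith [e1.le, e1.ge, e2, e3, e4, hm3]
  -- sublinearity contradiction
  have hηpos : (0:ℝ) < 1 / (2 * (n + N₀)) := by positivity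
  obtain ⟨Nh, hNh⟩ := devIn_sublinear lam v hrot hC0 hC hηpos
  obtain ⟨m, hm1, hm2, hm3⟩ := claim Nh
  have hmNh : Nh ≤ m := by omega
  have hsub := hNh m hmNh x hxK
  have hup : σ * D m ≤ |D m| := hσle' (D m)
  have hfin : ((Nh:ℝ) + 1) ≤ (Nh + 1) / 2 := by
    have hcast : (m:ℝ) ≤ (Nh + 1) * (n + N₀) := by exact_mod_cast hm2
    have hnN : (0:ℝ) < n + N₀ := by positivity
    calc ((Nh:ℝ) + 1) ≤ σ * D m := hm3
      _ ≤ |D m| := hup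
      _ ≤ 1 / (2 * (n + N₀)) * m := hsub
      _ ≤ 1 / (2 * (n + N₀)) * ((Nh + 1) * (n + N₀)) := by
          apply mul_le_mul_of_nonneg_left hcast (le_of_lt hηpos)
      _ = (Nh + 1) / 2 := by field_simp
  linarith

end
end

section
/- Let f ∈ Homeo₀(𝕋^d) with lift F, let K ⊆ 𝕋^d be a compact f-invariant set, let V ⊆ ℝ^d be a linear subspace with ρ_K(F) ⊆ v₀ + V^⊥ for some v₀ ∈ V, and let v ∈ 𝕊^{d−1}. Then ℛ_V(v) = {z ∈ K : v ∈ 𝒜_V(z)} is an f-invariant G_δ subset of K; in particular, if ℛ_V(v) contains a point whose forward orbit is dense in K, then ℛ_V(v) is a residual subset of K. -/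
open Filter Topology Set
open scoped RealInnerProductSpace

noncomputable section

/-- The set `ℛ_V(v) = {z ∈ K : v ∈ 𝒜_V(z)}` (defined via lifts). -/
def Rset {d : ℕ} (F : E d ≃ₜ E d) (V : Submodule ℝ (E d)) (v₀ : E d)
    (K : Set (Torus d)) (v : E d) : Set (Torus d) :=
  {z ∈ K | ∀ zl : E d, Tproj d zl = z → v ∈ asympDirs F V v₀ zl}

-- helper lemmas
lemma iter_add_mem {d : ℕ} {F : E d ≃ₜ E d} {f : Torus d → Torus d}
    (hlift : IsLiftOf F f) (n : ℕ) (z m : E d) (hm : m ∈ intLattice d) :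
    (F : E d → E d)^[n] (z + m) = (F : E d → E d)^[n] z + m := by
  induction n with
  | zero => simp
  | succ k ih =>
    rw [Function.iterate_succ_apply', Function.iterate_succ_apply', ih, hlift.2 _ m hm]

lemma dev_add_mem {d : ℕ} {F : E d ≃ₜ E d} {f : Torus d → Torus d}
    (hlift : IsLiftOf F f) (ρ : E d) (n : ℕ) (z m : E d) (hm : m ∈ intLattice d) :
    dev F ρ n (z + m) = dev F ρ n z := by
  unfold dev
  rw [iter_add_mem hlift n z m hm]
  abel

lemma dev_comp {d : ℕ} (F : E d ≃ₜ E d) (ρ : E d) (n : ℕ) (z : E d) :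
    dev F ρ n (F z) = dev F ρ (n + 1) z - dev F ρ 1 z := by
  unfold dev
  rw [← Function.iterate_succ_apply]
  push_cast
  simp only [Function.iterate_one]
  module

lemma devProj_comp {d : ℕ} (F : E d ≃ₜ E d) (V : Submodule ℝ (E d)) (ρ : E d) (n : ℕ) (z : E d) :
    devProj F V ρ n (F z) = devProj F V ρ (n + 1) z - devProj F V ρ 1 z := by
  unfold devProj
  rw [dev_comp, map_sub, Submodule.coe_sub]

lemma devProj_zero {d : ℕ} (F : E d ≃ₜ E d) (V : Submodule ℝ (E d)) (ρ : E d) (z : E d) :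
    devProj F V ρ 0 z = 0 := by
  unfold devProj dev
  simp

-- direction estimate
lemma dir_est {d : ℕ} (a b : E d) (ha : 0 < ‖a‖) (hb : 0 < ‖b‖) :
    ‖‖b‖⁻¹ • b - ‖a‖⁻¹ • a‖ ≤ 2 * ‖a - b‖ / ‖b‖ := by
  have key : ‖b‖⁻¹ • b - ‖a‖⁻¹ • a
      = ‖b‖⁻¹ • (b - a) + (‖b‖⁻¹ - ‖a‖⁻¹) • a := by module
  rw [key]
  have h1 : ‖‖b‖⁻¹ • (b - a)‖ = ‖b - a‖ / ‖b‖ := by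
    rw [norm_smul, norm_inv, norm_norm]; ring
  have h2 : ‖(‖b‖⁻¹ - ‖a‖⁻¹) • a‖ ≤ ‖a - b‖ / ‖b‖ := by
    rw [norm_smul, Real.norm_eq_abs]
    have heq : ‖b‖⁻¹ - ‖a‖⁻¹ = (‖a‖ - ‖b‖) / (‖a‖ * ‖b‖) := by
      field_simp
    rw [heq, abs_div, abs_of_pos (mul_pos ha hb)]
    have h3 : |‖a‖ - ‖b‖| ≤ ‖a - b‖ := abs_norm_sub_norm_le a b
    calc |‖a‖ - ‖b‖| / (‖a‖ * ‖b‖) * ‖a‖ = |‖a‖ - ‖b‖| / ‖b‖ := by field_simp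
      _ ≤ ‖a - b‖ / ‖b‖ := by gcongr
  calc ‖‖b‖⁻¹ • (b - a) + (‖b‖⁻¹ - ‖a‖⁻¹) • a‖
      ≤ ‖‖b‖⁻¹ • (b - a)‖ + ‖(‖b‖⁻¹ - ‖a‖⁻¹) • a‖ := norm_add_le _ _
    _ ≤ ‖a - b‖ / ‖b‖ + ‖a - b‖ / ‖b‖ := by
        rw [h1, norm_sub_rev]
        exact add_le_add le_rfl h2
    _ = 2 * ‖a - b‖ / ‖b‖ := by ring

lemma asympDirs_add_mem {d : ℕ} {F : E d ≃ₜ E d} {f : Torus d → Torus d}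
    (hlift : IsLiftOf F f) (V : Submodule ℝ (E d)) (ρ : E d) (z m : E d)
    (hm : m ∈ intLattice d) :
    asympDirs F V ρ (z + m) = asympDirs F V ρ z := by
  unfold asympDirs devProj
  simp only [dev_add_mem hlift ρ _ z m hm]

lemma asympDirs_F {d : ℕ} {F : E d ≃ₜ E d} {f : Torus d → Torus d}
    (hlift : IsLiftOf F f) (V : Submodule ℝ (E d)) (ρ : E d) (z : E d) (v : E d)
    (hz : v ∈ asympDirs F V ρ z) : v ∈ asympDirs F V ρ (F z) := by
  obtain ⟨hv1, h⟩ := hz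
  refine ⟨hv1, ?_⟩
  intro ε hε r hr
  set c : E d := devProj F V ρ 1 z with hc
  obtain ⟨n, hn1, hn2⟩ := h (ε / 2) (by linarith) (‖c‖ + max r (4 * ‖c‖ / ε))
    (by positivity)
  -- n ≥ 1
  obtain ⟨k, rfl⟩ : ∃ k, n = k + 1 := by
    rcases n with _ | k
    · exfalso
      rw [devProj_zero] at hn1
      simp only [norm_zero] at hn1
      have : (0:ℝ) < ‖c‖ + max r (4 * ‖c‖ / ε) := by positivity
      linarith [le_max_left r (4 * ‖c‖ / ε)]
    · exact ⟨k, rfl⟩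
  set a : E d := devProj F V ρ (k + 1) z with hadef
  have ha : 0 < ‖a‖ := by
    have : (0:ℝ) < ‖c‖ + max r (4 * ‖c‖ / ε) := by positivity
    linarith
  set b : E d := a - c with hbdef
  have hab : ‖a - b‖ = ‖c‖ := by rw [hbdef]; congr 1; abel
  have hbn : max r (4 * ‖c‖ / ε) < ‖b‖ := by
    have := norm_sub_norm_le a c
    have hb' : ‖a‖ - ‖c‖ ≤ ‖b‖ := by rw [hbdef]; exact this
    linarith
  have hbpos : (0:ℝ) < ‖b‖ := lt_of_le_of_lt (le_trans hr.le (le_max_left _ _)) hbn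
  have hdir : ‖‖b‖⁻¹ • b - ‖a‖⁻¹ • a‖ ≤ 2 * ‖a - b‖ / ‖b‖ := dir_est a b ha hbpos
  have hsmall : 2 * ‖a - b‖ / ‖b‖ < ε / 2 := by
    rw [hab]
    rw [div_lt_iff₀ hbpos]
    have h4 : 4 * ‖c‖ / ε < ‖b‖ := lt_of_le_of_lt (le_max_right _ _) hbn
    rw [div_lt_iff₀ hε] at h4
    nlinarith
  refine ⟨k, ?_, ?_⟩
  · rw [devProj_comp]
    rw [← hadef, ← hc, ← hbdef]
    exact lt_of_le_of_lt (le_max_left _ _) hbn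
  · rw [devProj_comp, ← hadef, ← hc, ← hbdef]
    calc ‖‖b‖⁻¹ • b - v‖ ≤ ‖‖b‖⁻¹ • b - ‖a‖⁻¹ • a‖ + ‖‖a‖⁻¹ • a - v‖ := by
          have := norm_add_le (‖b‖⁻¹ • b - ‖a‖⁻¹ • a) (‖a‖⁻¹ • a - v)
          simpa using this
      _ < ε / 2 + ε / 2 := add_lt_add (lt_of_le_of_lt hdir hsmall) hn2
      _ = ε := by ring

def Wset {d : ℕ} (v : E d) (ε r : ℝ) : Set (E d) :=
  {x | r < ‖x‖ ∧ ‖x - ‖x‖ • v‖ < ε * ‖x‖}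

lemma isOpen_Wset {d : ℕ} (v : E d) (ε r : ℝ) : IsOpen (Wset v ε r) := by
  apply IsOpen.inter
  · exact isOpen_lt continuous_const continuous_norm
  · exact isOpen_lt ((continuous_id.sub (continuous_norm.smul continuous_const)).norm)
      (continuous_const.mul continuous_norm)

lemma mem_Wset_iff {d : ℕ} (v : E d) {ε r : ℝ} (hr : 0 < r) (x : E d) :
    x ∈ Wset v ε r ↔ r < ‖x‖ ∧ ‖(‖x‖)⁻¹ • x - v‖ < ε := by
  unfold Wset
  simp only [Set.mem_setOf_eq]
  refine and_congr_right fun hx => ?_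
  have hx0 : 0 < ‖x‖ := lt_trans hr hx
  have h1 : (‖x‖)⁻¹ • x - v = (‖x‖)⁻¹ • (x - ‖x‖ • v) := by
    rw [smul_sub, smul_smul, inv_mul_cancel₀ hx0.ne', one_smul]
  have key : ‖(‖x‖)⁻¹ • x - v‖ = (‖x‖)⁻¹ * ‖x - ‖x‖ • v‖ := by
    rw [h1, norm_smul, norm_inv, norm_norm]
  rw [key, inv_mul_lt_iff₀ hx0, mul_comm]

lemma continuous_devProj {d : ℕ} (F : E d ≃ₜ E d) (V : Submodule ℝ (E d)) (ρ : E d) (n : ℕ) :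
    Continuous (fun z => devProj F V ρ n z) := by
  unfold devProj dev
  exact continuous_subtype_val.comp <| V.orthogonalProjection.continuous.comp <|
    ((F.continuous.iterate n).sub continuous_id).sub continuous_const

def Uset {d : ℕ} (F : E d ≃ₜ E d) (V : Submodule ℝ (E d)) (ρ v : E d) (ε r : ℝ) :
    Set (E d) :=
  ⋃ n : ℕ, (fun z => devProj F V ρ n z) ⁻¹' Wset v ε r

lemma isOpen_Uset {d : ℕ} (F : E d ≃ₜ E d) (V : Submodule ℝ (E d)) (ρ v : E d) (ε r : ℝ) :
    IsOpen (Uset F V ρ v ε r) :=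
  isOpen_iUnion fun n => (isOpen_Wset v ε r).preimage (continuous_devProj F V ρ n)

lemma mem_Uset_iff {d : ℕ} (F : E d ≃ₜ E d) (V : Submodule ℝ (E d)) (ρ v : E d)
    {ε r : ℝ} (hr : 0 < r) (z : E d) :
    z ∈ Uset F V ρ v ε r ↔ ∃ n : ℕ, r < ‖devProj F V ρ n z‖ ∧
      ‖(‖devProj F V ρ n z‖)⁻¹ • devProj F V ρ n z - v‖ < ε := by
  unfold Uset
  simp only [Set.mem_iUnion, Set.mem_preimage]
  exact exists_congr fun n => mem_Wset_iff v hr _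

lemma lift_diff {d : ℕ} {a b : E d} (h : Tproj d a = Tproj d b) :
    ∃ m ∈ intLattice d, b = a + m := by
  have h' : -a + b ∈ intLattice d := (QuotientAddGroup.eq (s := intLattice d)).mp h
  exact ⟨-a + b, h', by abel⟩

lemma devProj_add_mem {d : ℕ} {F : E d ≃ₜ E d} {f : Torus d → Torus d}
    (hlift : IsLiftOf F f) (V : Submodule ℝ (E d)) (ρ : E d) (n : ℕ) (z m : E d)
    (hm : m ∈ intLattice d) :
    devProj F V ρ n (z + m) = devProj F V ρ n z := by
  unfold devProj
  rw [dev_add_mem hlift ρ n z m hm]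

lemma isOpenMap_Tproj (d : ℕ) : IsOpenMap (Tproj d) :=
  QuotientAddGroup.isOpenMap_coe


/-- **Lemma (asymptotic directions, (d)).** `ℛ_V(v)` is an `f`-invariant `G_δ` subset of
`K`; in particular, if it contains a point with dense forward orbit in `K`, then it is
residual in `K` (being a dense `G_δ` subset of `K`). -/
theorem Rset_invariant_Gdelta_residual {d : ℕ} (f : Torus d → Torus d)
    (F : E d ≃ₜ E d) (hlift : IsLiftOf F f) (K : Set (Torus d)) (hKc : IsCompact K)
    (hKinv : f '' K = K) (V : Submodule ℝ (E d)) (v₀ : E d) (hv₀ : v₀ ∈ V)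
    (hrot : ∀ ρ' ∈ rotSetOn F K, ρ' - v₀ ∈ Vᗮ)
    (v : E d) (hv : ‖v‖ = 1) :
    (∀ z ∈ Rset F V v₀ K v, f z ∈ Rset F V v₀ K v) ∧
    (∃ T : Set (Torus d), IsGδ T ∧ Rset F V v₀ K v = T ∩ K) ∧
    ((∃ z ∈ Rset F V v₀ K v, K ⊆ closure (Set.range fun n : ℕ => f^[n] z)) →
      K ⊆ closure (Rset F V v₀ K v)) := by
  have hinv : ∀ z ∈ Rset F V v₀ K v, f z ∈ Rset F V v₀ K v := by
    rintro z ⟨hzK, hzl⟩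
    obtain ⟨zl, hzlq⟩ := Quotient.exists_rep z
    have hzlq : Tproj d zl = z := hzlq
    refine ⟨hKinv ▸ ⟨z, hzK, rfl⟩, ?_⟩
    intro wl hwl
    have h1 : Tproj d (F zl) = f z := by rw [hlift.1, hzlq]
    obtain ⟨m, hm, hwleq⟩ := lift_diff (h1.trans hwl.symm)
    rw [hwleq, asympDirs_add_mem hlift V v₀ _ m hm]
    exact asympDirs_F hlift V v₀ zl v (hzl zl hzlq)
  refine ⟨hinv, ?_, ?_⟩
  · refine ⟨⋂ k : ℕ, ⋂ j : ℕ, Tproj d '' Uset F V v₀ v (1 / ((k : ℝ) + 1)) ((j : ℝ) + 1),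
      ?_, ?_⟩
    · exact .iInter fun k => .iInter fun j =>
        (isOpenMap_Tproj d _ (isOpen_Uset F V v₀ v _ _)).isGδ
    · ext z
      constructor
      · rintro ⟨hzK, hzl⟩
        refine ⟨?_, hzK⟩
        simp only [Set.mem_iInter]
        intro k j
        obtain ⟨zl, hzlq⟩ := Quotient.exists_rep z
        have hzlq : Tproj d zl = z := hzlq
        refine ⟨zl, ?_, hzlq⟩
        rw [mem_Uset_iff F V v₀ v (by positivity) zl]
        exact (hzl zl hzlq).2 _ (by positivity) _ (by positivity)
      · rintro ⟨hT, hzK⟩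
        refine ⟨hzK, ?_⟩
        intro zl hzlq
        refine ⟨hv, ?_⟩
        intro ε hε r hr
        obtain ⟨k, hk⟩ := exists_nat_gt (1 / ε)
        obtain ⟨j, hj⟩ := exists_nat_gt r
        simp only [Set.mem_iInter] at hT
        obtain ⟨wl, hwlU, hwlq⟩ := hT k j
        obtain ⟨m, hm, hwleq⟩ := lift_diff (hzlq.trans hwlq.symm)
        rw [mem_Uset_iff F V v₀ v (by positivity) wl] at hwlU
        obtain ⟨n, h1, h2⟩ := hwlU
        rw [hwleq, devProj_add_mem hlift V v₀ n zl m hm] at h1 h2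
        have hk' : 1 / ((k : ℝ) + 1) < ε := by
          rw [div_lt_iff₀ (by positivity)]
          rw [div_lt_iff₀ hε] at hk
          nlinarith
        exact ⟨n, by linarith, lt_trans h2 hk'⟩
  · rintro ⟨z₀, hz₀, hdense⟩
    have horb : ∀ n : ℕ, f^[n] z₀ ∈ Rset F V v₀ K v := by
      intro n
      induction n with
      | zero => exact hz₀
      | succ k ih => rw [Function.iterate_succ_apply']; exact hinv _ ih
    intro x hx
    exact closure_mono (Set.range_subset_iff.mpr horb) (hdense hx)

end
end
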